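/- Let D be an infinite division ring (not assumed commutative) and let k ≥ 1. Then there exists an infinite subset S of D^k (the free left D-module of rank k) such that every k-element subset of S is linearly independent over D. -/

import Mathlib

set_option maxHeartbeats 1000000 in
/-- Over an infinite division ring there is an infinite subset of `D^k` any `k` elements of
which are linearly independent. -/
theorem stmt4 (D : Type*) [DivisionRing D] [Infinite D] (k : ℕ) (hk : 1 ≤ k) :
    ∃ S : Set (Fin k → D), S.Infinite ∧
      ∀ t : Finset (Fin k → D), ↑t ⊆ S → t.card = k →
        LinearIndependent D (fun v : (t : Set (Fin k → D)) => (v : Fin k → D)) := by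
  classical
  rcases eq_or_lt_of_le hk with hk1 | hk2
  · -- k = 1 : take all nonzero vectors
    refine ⟨{v : Fin k → D | v ≠ 0}, ?_, ?_⟩
    · have : Nonempty (Fin k) := ⟨⟨0, hk⟩⟩
      have : ({v : Fin k → D | v ≠ 0} : Set (Fin k → D)) = {(0 : Fin k → D)}ᶜ := by
        ext v; simp
      rw [this]
      exact (Set.finite_singleton _).infinite_compl
    · intro t hts htc
      subst hk1
      obtain ⟨v, rfl⟩ := Finset.card_eq_one.mp htc
      have hv : v ≠ 0 := hts (by simp)
      rw [Finset.coe_singleton]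
      exact (LinearIndepOn.singleton (R := D) (v := id) hv : _)
  -- k ≥ 2
  have hfr : Module.finrank D (Fin k → D) = k := Module.finrank_fin_fun D
  have havoid : ∀ s : Finset (Fin k → D),
      ∃ v : Fin k → D, ∀ u : Finset (Fin k → D), u ⊆ s → u.card < k →
        v ∉ Submodule.span D (u : Set (Fin k → D)) := by
    intro s
    set P : Finset (Submodule D (Fin k → D)) :=
      (s.powerset.filter (fun u => u.card < k)).image
        (fun u : Finset (Fin k → D) => Submodule.span D (u : Set (Fin k → D))) with hP
    have htop : ⊤ ∉ P := by
      rw [hP]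
      intro h
      rw [Finset.mem_image] at h
      obtain ⟨u, hu', hspan⟩ := h
      rw [Finset.mem_filter, Finset.mem_powerset] at hu'
      obtain ⟨hu, hcard⟩ := hu'
      have hlt : Submodule.span D ((u : Set (Fin k → D))) < ⊤ := by
        apply span_lt_top_of_card_lt_finrank
        rwa [Finset.toFinset_coe, hfr]
      exact hlt.ne hspan
    have hne := Subspace.biUnion_ne_univ_of_top_notMem htop
    rw [Set.ne_univ_iff_exists_notMem] at hne
    obtain ⟨v, hv⟩ := hne
    refine ⟨v, fun u hu hcard hmem => hv ?_⟩
    have hPmem : Submodule.span D ((u : Set (Fin k → D))) ∈ P := by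
      rw [hP, Finset.mem_image]
      exact ⟨u, Finset.mem_filter.mpr ⟨Finset.mem_powerset.mpr hu, hcard⟩, rfl⟩
    exact Set.mem_biUnion hPmem hmem
  obtain ⟨pick, hpick⟩ : ∃ pick : Finset (Fin k → D) → (Fin k → D),
      ∀ (s u : Finset (Fin k → D)), u ⊆ s → u.card < k →
        pick s ∉ Submodule.span D (u : Set (Fin k → D)) :=
    ⟨fun s => Classical.choose (havoid s), fun s => Classical.choose_spec (havoid s)⟩
  obtain ⟨g, hgs⟩ : ∃ g : ℕ → Finset (Fin k → D),
      ∀ n, g (n + 1) = insert (pick (g n)) (g n) :=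
    ⟨fun n => Nat.rec ∅ (fun _ t => insert (pick t) t) n, fun _ => rfl⟩
  obtain ⟨f, hfpick⟩ : ∃ f : ℕ → (Fin k → D), ∀ n, f n = pick (g n) :=
    ⟨fun n => pick (g n), fun _ => rfl⟩
  have hmono : ∀ {m n : ℕ}, m ≤ n → g m ⊆ g n := by
    intro m n h
    induction h with
    | refl => exact subset_rfl
    | @step n' h ih =>
      rw [hgs n']
      exact ih.trans (Finset.subset_insert _ _)
  have hfg : ∀ {m n : ℕ}, m < n → f m ∈ g n := by
    intro m n h
    refine hmono h ?_
    rw [hgs m, hfpick m]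
    exact Finset.mem_insert_self _ _
  have key : ∀ {m n : ℕ}, m < n → f m ≠ f n := by
    intro m n h heq
    have h1 : ({f m} : Finset (Fin k → D)) ⊆ g n := by
      simpa using hfg h
    have h2 : ({f m} : Finset (Fin k → D)).card < k := by
      simpa using hk2
    have h3 : f n ∉ Submodule.span D (({f m} : Finset (Fin k → D)) : Set (Fin k → D)) := by
      rw [hfpick n]
      exact hpick (g n) {f m} h1 h2
    rw [← heq, Finset.coe_singleton] at h3
    exact h3 (Submodule.mem_span_singleton_self _)
  have hinj : Function.Injective f := by
    intro m n hmn
    rcases lt_trichotomy m n with h | h | h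
    · exact absurd hmn (key h)
    · exact h
    · exact absurd hmn.symm (key h)
  have main : ∀ I : Finset ℕ, I.card ≤ k →
      LinearIndependent D
        (fun v : ((I.image f : Finset (Fin k → D)) : Set (Fin k → D)) => (v : Fin k → D)) := by
    intro I
    induction I using Finset.induction_on_max with
    | empty =>
      intro _
      rw [Finset.image_empty, Finset.coe_empty]
      exact linearIndependent_empty D (Fin k → D)
    | insert a I ha ih =>
      intro hcard
      have haI : a ∉ I := fun h => lt_irrefl a (ha a h)
      have hcardI : I.card < k := by
        rw [Finset.card_insert_of_notMem haI] at hcard; omega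
      have hsub : I.image f ⊆ g a := by
        intro v hv
        obtain ⟨m, hm, rfl⟩ := Finset.mem_image.mp hv
        exact hfg (ha m hm)
      have hcard' : (I.image f).card < k := lt_of_le_of_lt Finset.card_image_le hcardI
      have hfa : f a ∉ Submodule.span D ((I.image f : Finset (Fin k → D)) : Set (Fin k → D)) := by
        rw [hfpick a]
        exact hpick _ _ hsub hcard'
      have hins := LinearIndepOn.id_insert (s := ((I.image f : Finset (Fin k → D)) : Set (Fin k → D))) (ih hcardI.le) hfa
      rw [Finset.image_insert, Finset.coe_insert]
      exact hins
  refine ⟨Set.range f, Set.infinite_range_of_injective hinj, ?_⟩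
  intro t hts htc
  have hinjOn : Set.InjOn f (f ⁻¹' ↑t) := hinj.injOn
  set I : Finset ℕ := t.preimage f hinjOn with hI
  have hIt : I.image f = t := by
    rw [hI, Finset.image_preimage]
    apply Finset.filter_true_of_mem
    intro x hx
    exact hts hx
  have hIcard : I.card ≤ k := by
    have : (I.image f).card = I.card := Finset.card_image_of_injective _ hinj
    rw [hIt, htc] at this
    omega
  have := main I hIcard
  rwa [hIt] at this
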